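/- For any 0 < ε < 1 and any t > 0, one has μ̇(t) ≤ (1/ε + 2) · (σ_t²/t)^{1−ε}. -/

import Mathlib

open Filter Topology

lemma aux_small (x : ℝ) (h0 : 0 ≤ x) (h1 : x ≤ 1) : x ≤ 2 * (1 - Real.exp (-x)) := by
  have h := Real.add_one_le_exp x
  have hp := Real.exp_pos x
  have he : Real.exp (-x) = (Real.exp x)⁻¹ := Real.exp_neg x
  rw [he]
  have h2 : (Real.exp x)⁻¹ * Real.exp x = 1 := inv_mul_cancel₀ hp.ne'
  nlinarith [mul_pos (inv_pos.mpr hp) hp, inv_pos.mpr hp]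

lemma aux_yexp (y : ℝ) : y * Real.exp (-y) ≤ Real.exp (-1) := by
  have h := Real.add_one_le_exp (y - 1)
  have hp := Real.exp_pos (-y)
  have hkey : Real.exp (y - 1) * Real.exp (-y) = Real.exp (-1) := by
    rw [← Real.exp_add]; ring_nf
  nlinarith

lemma aux_holder (S : Finset ℕ) (a : ℕ → ℝ) (ha : ∀ i, 0 ≤ a i) (ε : ℝ)
    (hε0 : 0 < ε) (hε1 : ε < 1) :
    ∑ i ∈ S, a i ^ (1 - ε) ≤ (∑ i ∈ S, a i) ^ (1 - ε) * (S.card : ℝ) ^ ε := by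
  have h1ε : (0:ℝ) < 1 - ε := by linarith
  have hpq : Real.HolderConjugate (1/(1-ε)) (1/ε) := by
    rw [Real.holderConjugate_iff]
    constructor
    · rw [lt_div_iff₀ h1ε]; linarith
    · rw [one_div, one_div, inv_inv, inv_inv]; ring
  have H := Real.inner_le_Lp_mul_Lq_of_nonneg (s := S) hpq
    (f := fun i => a i ^ (1 - ε)) (g := fun _ => (1:ℝ))
    (fun i _ => Real.rpow_nonneg (ha i) _) (fun i _ => zero_le_one)
  simp only [mul_one, one_div_one_div] at H
  calc ∑ i ∈ S, a i ^ (1-ε) ≤ (∑ i ∈ S, (a i ^ (1-ε)) ^ (1/(1-ε))) ^ (1-ε)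
        * (∑ i ∈ S, (1:ℝ) ^ (1/ε)) ^ ε := H
    _ = (∑ i ∈ S, a i) ^ (1 - ε) * (S.card : ℝ) ^ ε := by
        congr 2
        · apply Finset.sum_congr rfl
          intro i _
          rw [← Real.rpow_mul (ha i), mul_one_div, div_self h1ε.ne', Real.rpow_one]
        · simp

/-- For any `0 < ε < 1` and `t > 0`: `μ̇(t) ≤ (1/ε + 2)·(σ_t²/t)^(1−ε)`. -/
theorem mu_derivative_var_bound
    (π : ℕ → ℝ) (hπpos : ∀ i, 0 < π i) (hπmono : ∀ i, π (i + 1) ≤ π i)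
    (hπsum : HasSum π 1)
    (μ : ℝ → ℝ) (hμ : ∀ t, μ t = ∑' i, (1 - Real.exp (-t * π i)))
    (μ' : ℝ → ℝ) (hμ' : ∀ t, μ' t = ∑' i, π i * Real.exp (-t * π i))
    (ε t : ℝ) (hε0 : 0 < ε) (hε1 : ε < 1) (ht : 0 < t) :
    μ' t ≤ (1 / ε + 2) * ((μ (2 * t) - μ t) / t) ^ (1 - ε) := by
  have h1ε : (0:ℝ) < 1 - ε := by linarith
  have hSump : Summable π := hπsum.summable
  set f : ℕ → ℝ := fun i => π i * Real.exp (-t * π i) with hfdef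
  set g : ℕ → ℝ := fun i => Real.exp (-t * π i) - Real.exp (-(2*t) * π i) with hgdef
  have hE1 : ∀ i, Real.exp (-t * π i) ≤ 1 := fun i =>
    Real.exp_le_one_iff.mpr (by nlinarith [hπpos i])
  have hf_nonneg : ∀ i, 0 ≤ f i := fun i => mul_nonneg (hπpos i).le (Real.exp_pos _).le
  have hf_le : ∀ i, f i ≤ π i := fun i => by
    show π i * Real.exp (-t * π i) ≤ π i
    have := hE1 i; nlinarith [hπpos i, Real.exp_pos (-t * π i)]
  have hfsum : Summable f := Summable.of_nonneg_of_le hf_nonneg hf_le hSump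
  have hg_pos : ∀ i, 0 < g i := fun i => by
    have : -(2*t) * π i < -t * π i := by nlinarith [hπpos i]
    simpa [hgdef] using sub_pos.mpr (Real.exp_lt_exp.mpr this)
  have hg_le : ∀ i, g i ≤ t * π i := fun i => by
    have h1 : 1 - t * π i ≤ Real.exp (-t * π i) := by
      have := Real.add_one_le_exp (-t * π i); linarith
    have h2 : 0 < Real.exp (-(2*t) * π i) := Real.exp_pos _
    have h3 := hE1 i
    have hsq : Real.exp (-(2*t) * π i) = Real.exp (-t * π i) * Real.exp (-t * π i) := by
      rw [← Real.exp_add]; ring_nf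
    show Real.exp (-t * π i) - Real.exp (-(2*t) * π i) ≤ t * π i
    nlinarith [sq_nonneg (1 - Real.exp (-t * π i))]
  have hgsum : Summable g := Summable.of_nonneg_of_le (fun i => (hg_pos i).le) hg_le
    (hSump.mul_left t)
  set V := ∑' i, g i with hVdef
  have hV0 : 0 < V := Summable.tsum_pos hgsum (fun i => (hg_pos i).le) 0 (hg_pos 0)
  -- identify μ(2t) - μ(t) with V
  have hsum1 : Summable (fun i => 1 - Real.exp (-t * π i)) := by
    apply Summable.of_nonneg_of_le (fun i => by have := hE1 i; linarith)
      (fun i => ?_) (hSump.mul_left t)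
    have := Real.add_one_le_exp (-t * π i); linarith
  have hsum2 : Summable (fun i => 1 - Real.exp (-(2*t) * π i)) := by
    apply Summable.of_nonneg_of_le
      (fun i => by
        have : Real.exp (-(2*t) * π i) ≤ 1 :=
          Real.exp_le_one_iff.mpr (by nlinarith [hπpos i])
        linarith)
      (fun i => ?_) (hSump.mul_left (2*t))
    have := Real.add_one_le_exp (-(2*t) * π i); linarith
  have hμdiff : μ (2*t) - μ t = V := by
    rw [hμ (2*t), hμ t, ← Summable.tsum_sub hsum2 hsum1, hVdef]
    congr 1; funext i; simp only [hgdef]; ring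
  rw [hμdiff, hμ' t]
  -- trivial case : 1 ≤ V / t
  rcases le_or_gt 1 (V / t) with hcase | hcase
  · have h1 : ∑' i, f i ≤ 1 := by
      rw [← hπsum.tsum_eq]
      exact Summable.tsum_le_tsum hf_le hfsum hSump
    have h2 : (1:ℝ) ≤ (V/t) ^ (1-ε) := Real.one_le_rpow hcase h1ε.le
    have h3 : (1:ℝ) ≤ 1/ε + 2 := by
      have : 0 < 1/ε := by positivity
      linarith
    calc ∑' i, f i ≤ 1 := h1
      _ ≤ (1/ε + 2) * (V/t) ^ (1-ε) := by nlinarith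
  -- main case
  · -- the finite set of large indices
    obtain ⟨N, hN⟩ : ∃ N, ∀ i ≥ N, π i < 1/t := by
      have h0 := hSump.tendsto_atTop_zero
      have : ∀ᶠ i in atTop, π i < 1/t :=
        h0.eventually_lt_const (by positivity)
      exact eventually_atTop.mp this
    set S : Finset ℕ := (Finset.range N).filter (fun i => 1 < t * π i) with hSdef
    have hS_out : ∀ i ∉ S, t * π i ≤ 1 := by
      intro i hi
      by_contra hcon
      push_neg at hcon
      rcases lt_or_ge i N with h | h
      · exact hi (Finset.mem_filter.mpr ⟨Finset.mem_range.mpr h, hcon⟩)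
      · have := hN i h
        have : t * π i < 1 := by
          rw [lt_div_iff₀ ht] at this; linarith [this]
        linarith
    have hS_in : ∀ i ∈ S, 1 < t * π i := fun i hi => (Finset.mem_filter.mp hi).2
    have hS_card : (S.card : ℝ) ≤ t := by
      have h1 : ∀ i ∈ S, 1/t ≤ π i := fun i hi => by
        have := hS_in i hi
        rw [div_le_iff₀ ht]; nlinarith
      have h2 : S.card • (1/t) ≤ ∑ i ∈ S, π i := Finset.card_nsmul_le_sum S π (1/t) h1
      have h3 : ∑ i ∈ S, π i ≤ 1 := by
        rw [← hπsum.tsum_eq]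
        exact Summable.sum_le_tsum S (fun i _ => (hπpos i).le) hSump
      rw [nsmul_eq_mul] at h2
      have h4 := h2.trans h3
      rw [mul_one_div, div_le_one ht] at h4
      exact h4
    -- split the sum
    set T : Set ℕ := ↑S with hTdef
    have hsplit : ∑' i, f i = ∑ i ∈ S, f i + ∑' (i : ↥Tᶜ), f i := by
      rw [← Summable.tsum_add_tsum_compl (s := T) (hfsum.subtype T) (hfsum.subtype Tᶜ)]
      congr 1
      exact Finset.tsum_subtype' S f
    -- small part
    have hsmall : ∑' (i : ↥Tᶜ), f (i : ℕ) ≤ 2 * ((V/t) ^ (1-ε)) := by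
      have hterm : ∀ i : ↥Tᶜ, f (i : ℕ) ≤ (2/t) * g (i : ℕ) := by
        rintro ⟨i, hi⟩
        have hi' : i ∉ S := by simpa [hTdef] using hi
        have hx1 : t * π i ≤ 1 := hS_out i hi'
        have hx0 : 0 ≤ t * π i := mul_nonneg ht.le (hπpos i).le
        have key := aux_small (t * π i) hx0 hx1
        have hE : Real.exp (-(t * π i)) = Real.exp (-t * π i) := by ring_nf
        rw [hE] at key
        have hEp : 0 < Real.exp (-t * π i) := Real.exp_pos _
        have hg2 : g i = Real.exp (-t * π i) * (1 - Real.exp (-t * π i)) := by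
          have : Real.exp (-(2*t) * π i) = Real.exp (-t * π i) * Real.exp (-t * π i) := by
            rw [← Real.exp_add]; ring_nf
          simp only [hgdef, this]; ring
        simp only [hfdef, hg2]
        rw [div_mul_eq_mul_div, le_div_iff₀ ht]
        nlinarith
      have h1 : ∑' (i : ↥Tᶜ), f (i : ℕ) ≤ ∑' (i : ↥Tᶜ), (2/t) * g (i : ℕ) :=
        Summable.tsum_le_tsum hterm (hfsum.subtype _) ((hgsum.mul_left (2/t)).subtype _)
      have h2 : ∑' (i : ↥Tᶜ), (2/t) * g (i : ℕ) = (2/t) * ∑' (i : ↥Tᶜ), g (i : ℕ) :=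
        tsum_mul_left
      have h3 : ∑' (i : ↥Tᶜ), g (i : ℕ) ≤ V := by
        have hV' : V = ∑' (i : T), g (i : ℕ) + ∑' (i : ↥Tᶜ), g (i : ℕ) :=
          (Summable.tsum_add_tsum_compl (s := T) (hgsum.subtype T) (hgsum.subtype Tᶜ)).symm
        have : 0 ≤ ∑' (i : T), g (i : ℕ) :=
          tsum_nonneg (fun i => (hg_pos i).le)
        linarith
      have h4 : (2/t) * ∑' (i : ↥Tᶜ), g (i : ℕ) ≤ (2/t) * V := by
        apply mul_le_mul_of_nonneg_left h3 (by positivity)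
      have h5 : (2/t) * V = 2 * (V/t) := by ring
      have h6 : V/t ≤ (V/t) ^ (1-ε) := by
        have := Real.rpow_le_rpow_of_exponent_ge (x := V/t) (by positivity) hcase.le
          (show 1 - ε ≤ 1 by linarith)
        rwa [Real.rpow_one] at this
      calc ∑' (i : ↥Tᶜ), f (i : ℕ) ≤ (2/t) * ∑' (i : ↥Tᶜ), g (i : ℕ) := h1.trans_eq h2
        _ ≤ 2 * (V/t) := by linarith
        _ ≤ 2 * ((V/t) ^ (1-ε)) := by linarith
    -- large part
    have hlarge : ∑ i ∈ S, f i ≤ (1/ε) * ((V/t) ^ (1-ε)) := by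
      set a : ℕ → ℝ := fun i => Real.exp (-t * π i) with hadef
      have ha_nonneg : ∀ i, 0 ≤ a i := fun i => (Real.exp_pos _).le
      -- termwise bound
      have hterm : ∀ i ∈ S, f i ≤ (1/(Real.exp 1 * ε * t)) * a i ^ (1-ε) := by
        intro i hi
        set x := t * π i with hxdef
        have hx1 : 1 < x := hS_in i hi
        have hax : a i = Real.exp (-x) := by
          show Real.exp (-t * π i) = Real.exp (-x)
          congr 1; rw [hxdef]; ring
        -- x * exp(-x) ≤ (1/(e ε)) * exp(-x)^(1-ε)
        have key : x * Real.exp (-x) ≤ (1/(Real.exp 1 * ε)) * Real.exp (-x) ^ (1-ε) := by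
          have h1 : Real.exp (-x) = Real.exp (-(ε*x)) * Real.exp (-((1-ε)*x)) := by
            rw [← Real.exp_add]; ring_nf
          have h2 : (ε * x) * Real.exp (-(ε*x)) ≤ Real.exp (-1) := aux_yexp (ε*x)
          have h3 : x * Real.exp (-(ε*x)) ≤ (1/ε) * Real.exp (-1) := by
            rw [div_mul_eq_mul_div, le_div_iff₀ hε0]
            calc x * Real.exp (-(ε*x)) * ε = (ε * x) * Real.exp (-(ε*x)) := by ring
              _ ≤ Real.exp (-1) := h2
              _ = 1 * Real.exp (-1) := (one_mul _).symm
          have h4 : Real.exp (-((1-ε)*x)) = Real.exp (-x) ^ (1-ε) := by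
            rw [show -((1-ε)*x) = (-x) * (1-ε) by ring, Real.exp_mul]
          have h5 : Real.exp (-1) = 1 / Real.exp 1 := by
            rw [Real.exp_neg, one_div]
          have hEp : 0 < Real.exp (-((1-ε)*x)) := Real.exp_pos _
          calc x * Real.exp (-x) = (x * Real.exp (-(ε*x))) * Real.exp (-((1-ε)*x)) := by
                rw [h1]; ring
            _ ≤ ((1/ε) * Real.exp (-1)) * Real.exp (-((1-ε)*x)) := by
                apply mul_le_mul_of_nonneg_right h3 hEp.le
            _ = (1/(Real.exp 1 * ε)) * Real.exp (-x) ^ (1-ε) := by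
                rw [h5, ← h4]; ring
        have hfx : f i = (1/t) * (x * Real.exp (-x)) := by
          simp only [hfdef, hxdef]
          have : -(t * π i) = -t * π i := by ring
          rw [this]; field_simp
        rw [hfx, hax]
        calc (1/t) * (x * Real.exp (-x))
            ≤ (1/t) * ((1/(Real.exp 1 * ε)) * Real.exp (-x) ^ (1-ε)) := by
              apply mul_le_mul_of_nonneg_left key (by positivity)
          _ = (1/(Real.exp 1 * ε * t)) * Real.exp (-x) ^ (1-ε) := by ring
      have hsum_term : ∑ i ∈ S, f i ≤ (1/(Real.exp 1 * ε * t)) * ∑ i ∈ S, a i ^ (1-ε) := by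
        rw [Finset.mul_sum]
        exact Finset.sum_le_sum hterm
      -- Hölder
      have hhold := aux_holder S a ha_nonneg ε hε0 hε1
      -- sum of a over S bounded by 2V
      have ha_le : ∀ i ∈ S, a i ≤ 2 * g i := by
        intro i hi
        have hx1 : 1 < t * π i := hS_in i hi
        have hE : Real.exp (-t * π i) ≤ Real.exp (-1) := by
          apply Real.exp_le_exp.mpr; nlinarith
        have he2 : Real.exp (-1) ≤ 1/2 := by
          rw [Real.exp_neg]
          have h2e : (2:ℝ) ≤ Real.exp 1 := by
            have := Real.add_one_le_exp 1; linarith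
          rw [inv_le_comm₀ (Real.exp_pos 1) (by norm_num)] at *
          · linarith
        have hEp : 0 < Real.exp (-t * π i) := Real.exp_pos _
        have hg2 : g i = Real.exp (-t * π i) * (1 - Real.exp (-t * π i)) := by
          have : Real.exp (-(2*t) * π i) = Real.exp (-t * π i) * Real.exp (-t * π i) := by
            rw [← Real.exp_add]; ring_nf
          simp only [hgdef, this]; ring
        simp only [hadef, hg2]
        nlinarith
      have hsa : ∑ i ∈ S, a i ≤ 2 * V := by
        calc ∑ i ∈ S, a i ≤ ∑ i ∈ S, 2 * g i := Finset.sum_le_sum ha_le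
          _ = 2 * ∑ i ∈ S, g i := by rw [Finset.mul_sum]
          _ ≤ 2 * V := by
              have := Summable.sum_le_tsum S (fun i _ => (hg_pos i).le) hgsum
              linarith
      -- combine
      have ha_sum_nonneg : (0:ℝ) ≤ ∑ i ∈ S, a i :=
        Finset.sum_nonneg (fun i _ => ha_nonneg i)
      have hpow1 : (∑ i ∈ S, a i) ^ (1-ε) ≤ (2*V) ^ (1-ε) :=
        Real.rpow_le_rpow ha_sum_nonneg hsa h1ε.le
      have hpow2 : (S.card : ℝ) ^ ε ≤ t ^ ε :=
        Real.rpow_le_rpow (Nat.cast_nonneg _) hS_card hε0.le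
      have hholdall : ∑ i ∈ S, a i ^ (1-ε) ≤ (2*V) ^ (1-ε) * t ^ ε := by
        calc ∑ i ∈ S, a i ^ (1-ε) ≤ (∑ i ∈ S, a i) ^ (1-ε) * (S.card : ℝ) ^ ε := hhold
          _ ≤ (2*V) ^ (1-ε) * t ^ ε := by
              apply mul_le_mul hpow1 hpow2 (Real.rpow_nonneg (Nat.cast_nonneg _) _)
                (Real.rpow_nonneg (by positivity) _)
      -- final algebra
      have halg : (1/(Real.exp 1 * ε * t)) * ((2*V) ^ (1-ε) * t ^ ε)
          ≤ (1/ε) * ((V/t) ^ (1-ε)) := by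
        have h2V : (2*V) ^ (1-ε) = 2 ^ (1-ε) * V ^ (1-ε) :=
          Real.mul_rpow (by norm_num) hV0.le
        have hVt : (V/t) ^ (1-ε) = V ^ (1-ε) / t ^ (1-ε) :=
          Real.div_rpow hV0.le ht.le (1-ε)
        have htsplit : t ^ ε * t ^ (1-ε) = t := by
          rw [← Real.rpow_add ht]; norm_num
        have h2le : (2:ℝ) ^ (1-ε) ≤ Real.exp 1 := by
          have : (2:ℝ) ^ (1-ε) ≤ 2 ^ (1:ℝ) :=
            Real.rpow_le_rpow_of_exponent_le (by norm_num) (by linarith)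
          rw [Real.rpow_one] at this
          have h2e : (2:ℝ) ≤ Real.exp 1 := by
            have := Real.add_one_le_exp 1; linarith
          linarith
        have hVp : 0 < V ^ (1-ε) := Real.rpow_pos_of_pos hV0 _
        have htp : 0 < t ^ ε := Real.rpow_pos_of_pos ht _
        have htp' : 0 < t ^ (1-ε) := Real.rpow_pos_of_pos ht _
        have hep : 0 < Real.exp 1 := Real.exp_pos 1
        have hr : (1/ε) * (V ^ (1-ε) / t ^ (1-ε)) = V ^ (1-ε) / (ε * t ^ (1-ε)) := by
          field_simp
        rw [h2V, hVt, hr]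
        rw [div_mul_eq_mul_div, div_le_div_iff₀ (by positivity) (by positivity)]
        calc 1 * (2 ^ (1-ε) * V ^ (1-ε) * t ^ ε) * (ε * t ^ (1-ε))
            = (2 ^ (1-ε)) * (V ^ (1-ε) * ε) * (t ^ ε * t ^ (1-ε)) := by ring
          _ ≤ Real.exp 1 * (V ^ (1-ε) * ε) * t := by
              rw [htsplit]
              apply mul_le_mul_of_nonneg_right
                (mul_le_mul_of_nonneg_right h2le (by positivity)) ht.le
          _ = V ^ (1-ε) * (Real.exp 1 * ε * t) := by ring
      calc ∑ i ∈ S, f i ≤ (1/(Real.exp 1 * ε * t)) * ∑ i ∈ S, a i ^ (1-ε) := hsum_term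
        _ ≤ (1/(Real.exp 1 * ε * t)) * ((2*V) ^ (1-ε) * t ^ ε) := by
            apply mul_le_mul_of_nonneg_left hholdall (by positivity)
        _ ≤ (1/ε) * ((V/t) ^ (1-ε)) := halg
    rw [hsplit]
    calc ∑ i ∈ S, f i + ∑' (i : ↥Tᶜ), f (i : ℕ)
        ≤ (1/ε) * ((V/t) ^ (1-ε)) + 2 * ((V/t) ^ (1-ε)) := add_le_add hlarge hsmall
      _ = (1/ε + 2) * (V/t) ^ (1-ε) := by ring
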